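/- Let ν ∈ (0,1), r > 0, and ρ_D ≥ r. Define ρ_D†(θ) = ν r (ν cos θ + √(1 - ν² sin² θ))/(1 - ν²) and ρ_A(ρ_D, θ) = √((ρ_D + r cos θ)² + r² sin² θ). If ρ_D ≤ ρ_D†(θ) then ν · ρ_A(ρ_D, θ) ≥ ρ_D (the defender has angular speed advantage). -/
import Mathlib


theorem angular_advantage_below_critical (ν r θ ρD : ℝ) (hν0 : 0 < ν) (hν1 : ν < 1)
    (hr : 0 < r) (hρD : r ≤ ρD)
    (hle : ρD ≤ ν * r * (ν * Real.cos θ + Real.sqrt (1 - ν^2 * (Real.sin θ)^2)) / (1 - ν^2)) :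
    ν * Real.sqrt ((ρD + r * Real.cos θ)^2 + r^2 * (Real.sin θ)^2) ≥ ρD := by
  set c := Real.cos θ
  set s0 := Real.sin θ
  have hpyth : s0 ^ 2 + c ^ 2 = 1 := Real.sin_sq_add_cos_sq θ
  have hν2 : (0:ℝ) < 1 - ν ^ 2 := by nlinarith
  have harg : (0:ℝ) ≤ 1 - ν ^ 2 * s0 ^ 2 := by nlinarith [sq_nonneg s0, sq_nonneg c]
  set s := Real.sqrt (1 - ν ^ 2 * s0 ^ 2) with hs
  have hs0 : 0 ≤ s := Real.sqrt_nonneg _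
  have hs2 : s ^ 2 = 1 - ν ^ 2 * s0 ^ 2 := Real.sq_sqrt harg
  have hsge : ν * c ≤ s := by nlinarith [sq_nonneg (s - ν * c), sq_nonneg (s + ν * c)]
  have hρDpos : 0 < ρD := lt_of_lt_of_le hr hρD
  have hle' : (1 - ν ^ 2) * ρD ≤ ν * r * (ν * c + s) := by
    rw [mul_comm]
    exact (le_div_iff₀ hν2).mp hle
  have h1 : 0 ≤ ν * r * (ν * c + s) - (1 - ν ^ 2) * ρD := by linarith
  have h2 : 0 ≤ (1 - ν ^ 2) * ρD - ν * r * (ν * c - s) := by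
    have : ν * r * (ν * c - s) ≤ 0 :=
      mul_nonpos_of_nonneg_of_nonpos (by positivity) (by linarith)
    nlinarith
  have key : ρD ^ 2 ≤ ν ^ 2 * ((ρD + r * c) ^ 2 + r ^ 2 * s0 ^ 2) := by
    nlinarith [mul_nonneg h1 h2, sq_nonneg (ν * r), hρDpos.le]
  have hX : (0:ℝ) ≤ (ρD + r * c) ^ 2 + r ^ 2 * s0 ^ 2 := by positivity
  have := Real.sqrt_le_sqrt key
  rw [Real.sqrt_sq hρDpos.le, Real.sqrt_mul (sq_nonneg ν), Real.sqrt_sq hν0.le] at this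
  exact this
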